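/- Let (H,R,χ) be a pre-Cartier triangular Hopf algebra with antipode S. Then (m⊗Id)(S⊗ρˡ)(χ) = −χ, where ρˡ(a) = R⁻¹(1⊗a)R; explicitly, writing χ = χⁱ⊗χᵢ and R = Rʲ⊗Rⱼ with R⁻¹ = Rᵒᵖ, one has S(χⁱ)RⱼRᵏ ⊗ Rʲχᵢ Rₖ = −χⁱ⊗χᵢ. -/

import Mathlib

open scoped TensorProduct

noncomputable section

variable (k H : Type*) [CommRing k] [Ring H] [HopfAlgebra k H]

/-- leg embedding `a ⊗ b ↦ a ⊗ b ⊗ 1` into `H ⊗ (H ⊗ H)`. -/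
def leg12 : H ⊗[k] H →ₐ[k] H ⊗[k] (H ⊗[k] H) :=
  Algebra.TensorProduct.map (AlgHom.id k H) Algebra.TensorProduct.includeLeft

/-- leg embedding `a ⊗ b ↦ 1 ⊗ a ⊗ b`. -/
def leg23 : H ⊗[k] H →ₐ[k] H ⊗[k] (H ⊗[k] H) :=
  Algebra.TensorProduct.includeRight

/-- leg embedding `a ⊗ b ↦ a ⊗ 1 ⊗ b`. -/
def leg13 : H ⊗[k] H →ₐ[k] H ⊗[k] (H ⊗[k] H) :=
  Algebra.TensorProduct.map (AlgHom.id k H) Algebra.TensorProduct.includeRight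

/-- `(Id ⊗ Δ)` as an algebra map `H ⊗ H → H ⊗ (H ⊗ H)`. -/
def idComul : H ⊗[k] H →ₐ[k] H ⊗[k] (H ⊗[k] H) :=
  Algebra.TensorProduct.map (AlgHom.id k H) (Bialgebra.comulAlgHom k H)

/-- `(Δ ⊗ Id)` as an algebra map `H ⊗ H → H ⊗ (H ⊗ H)` (after reassociation). -/
def comulId : H ⊗[k] H →ₐ[k] H ⊗[k] (H ⊗[k] H) :=
  (Algebra.TensorProduct.assoc k k k H H H).toAlgHom.comp
    (Algebra.TensorProduct.map (Bialgebra.comulAlgHom k H) (AlgHom.id k H))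

/-- the flip `a ⊗ b ↦ b ⊗ a` as an algebra map. -/
def swapT : H ⊗[k] H →ₐ[k] H ⊗[k] H := (Algebra.TensorProduct.comm k H H).toAlgHom

/-- A quasitriangular structure on the bialgebra `H`. -/
structure QT where
  R : H ⊗[k] H
  Rinv : H ⊗[k] H
  mul_inv : R * Rinv = 1
  inv_mul : Rinv * R = 1
  quasi_cocomm : ∀ h : H, swapT k H (Coalgebra.comul (R := k) h) * R = R * Coalgebra.comul (R := k) h
  hex1 : idComul k H R = leg13 k H R * leg12 k H R
  hex2 : comulId k H R = leg13 k H R * leg23 k H R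

/-- A pre-Cartier quasitriangular bialgebra structure on `H`. -/
structure PreCartier extends QT k H where
  χ : H ⊗[k] H
  chi_comm : ∀ h : H, χ * Coalgebra.comul (R := k) h = Coalgebra.comul (R := k) h * χ
  chi_hex1 : idComul k H χ = leg12 k H χ + leg12 k H Rinv * leg13 k H χ * leg12 k H R
  chi_hex2 : comulId k H χ = leg23 k H χ + leg23 k H Rinv * leg13 k H χ * leg23 k H R

/-- `F(a ⊗ (b ⊗ c)) = S(a)b ⊗ c`. -/
def Fmap : H ⊗[k] (H ⊗[k] H) →ₗ[k] H ⊗[k] H :=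
  (LinearMap.rTensor H (LinearMap.mul' k H)) ∘ₗ
    ((TensorProduct.assoc k H H H).symm.toLinearMap ∘ₗ
      (LinearMap.rTensor (H ⊗[k] H) (HopfAlgebra.antipode (R := k))))

lemma Fmap_tmul (a b c : H) :
    Fmap k H (a ⊗ₜ[k] (b ⊗ₜ[k] c)) = (HopfAlgebra.antipode (R := k) a * b) ⊗ₜ[k] c := by
  simp [Fmap]

/-- `g(a ⊗ x) = ε(a) • x` as an algebra map. -/
def gmap : H ⊗[k] (H ⊗[k] H) →ₐ[k] H ⊗[k] H :=
  (Algebra.TensorProduct.lid k (H ⊗[k] H)).toAlgHom.comp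
    (Algebra.TensorProduct.map (Bialgebra.counitAlgHom k H) (AlgHom.id k (H ⊗[k] H)))

lemma gmap_tmul (a : H) (x : H ⊗[k] H) :
    gmap k H (a ⊗ₜ[k] x) = Coalgebra.counit (R := k) a • x := by
  simp [gmap]

lemma antipode_one' : (HopfAlgebra.antipode (R := k) (A := H)) 1 = 1 := by
  have := HopfAlgebra.mul_antipode_rTensor_comul_apply (R := k) (A := H) 1
  simpa [Algebra.TensorProduct.one_def] using this

lemma Fmap_one_tmul (x : H ⊗[k] H) : Fmap k H ((1 : H) ⊗ₜ[k] x) = x := by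
  induction x using TensorProduct.induction_on with
  | zero => simp
  | tmul a b => rw [Fmap_tmul, antipode_one', one_mul]
  | add x y hx hy =>
      rw [TensorProduct.tmul_add, map_add, hx, hy]

lemma Fmap_leg23 (x : H ⊗[k] H) : Fmap k H (leg23 k H x) = x :=
  Fmap_one_tmul k H x

lemma gmap_leg23 (x : H ⊗[k] H) : gmap k H (leg23 k H x) = x := by
  have : leg23 k H x = (1 : H) ⊗ₜ[k] x := rfl
  rw [this, gmap_tmul]
  simp

lemma gmap_assoc_tmul (c : H ⊗[k] H) (b : H) :
    gmap k H (TensorProduct.assoc k H H H (c ⊗ₜ[k] b)) =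
      (TensorProduct.lid k H ((LinearMap.rTensor H (Coalgebra.counit (R := k))) c)) ⊗ₜ[k] b := by
  induction c using TensorProduct.induction_on with
  | zero =>
      rw [TensorProduct.zero_tmul, LinearEquiv.map_zero, map_zero, LinearMap.map_zero,
        LinearEquiv.map_zero, TensorProduct.zero_tmul]
  | tmul a₁ a₂ =>
      simp [gmap_tmul, TensorProduct.smul_tmul']
  | add x y hx hy =>
      simp only [TensorProduct.add_tmul, map_add, hx, hy]

lemma gmap_comulId (x : H ⊗[k] H) : gmap k H (comulId k H x) = x := by
  induction x using TensorProduct.induction_on with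
  | zero => simp
  | tmul a b =>
      have h1 : comulId k H (a ⊗ₜ[k] b) =
          TensorProduct.assoc k H H H ((Coalgebra.comul (R := k) a) ⊗ₜ[k] b) := rfl
      rw [h1, gmap_assoc_tmul, Coalgebra.rTensor_counit_comul]
      simp
  | add x y hx hy => rw [map_add, map_add, hx, hy]

lemma Fmap_assoc_tmul (c : H ⊗[k] H) (b : H) :
    Fmap k H (TensorProduct.assoc k H H H (c ⊗ₜ[k] b)) =
      (LinearMap.mul' k H (LinearMap.rTensor H (HopfAlgebra.antipode (R := k)) c)) ⊗ₜ[k] b := by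
  induction c using TensorProduct.induction_on with
  | zero =>
      rw [TensorProduct.zero_tmul, LinearEquiv.map_zero, LinearMap.map_zero, LinearMap.map_zero,
        LinearMap.map_zero, TensorProduct.zero_tmul]
  | tmul a₁ a₂ => simp [Fmap_tmul]
  | add x y hx hy =>
      simp only [TensorProduct.add_tmul, map_add, hx, hy]

lemma Fmap_comulId (x : H ⊗[k] H) : Fmap k H (comulId k H x) = gmap k H (leg13 k H x) := by
  induction x using TensorProduct.induction_on with
  | zero => simp
  | tmul a b =>
      have h1 : comulId k H (a ⊗ₜ[k] b) =
          TensorProduct.assoc k H H H ((Coalgebra.comul (R := k) a) ⊗ₜ[k] b) := rfl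
      have h2 : leg13 k H (a ⊗ₜ[k] b) = a ⊗ₜ[k] ((1 : H) ⊗ₜ[k] b) := rfl
      rw [h1, Fmap_assoc_tmul, HopfAlgebra.mul_antipode_rTensor_comul_apply, h2, gmap_tmul,
        TensorProduct.smul_tmul', Algebra.algebraMap_eq_smul_one, Algebra.smul_def, mul_one]
  | add x y hx hy => simp only [map_add, hx, hy]

/-- for a pre-Cartier triangular Hopf algebra `(H,R,χ)` with antipode `S`,
`(m⊗Id)(S⊗ρˡ)(χ) = −χ`, where `ρˡ(a) = R⁻¹(1⊗a)R`. -/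
theorem antipode_rho_l_chi (P : PreCartier k H) (htri : P.Rinv = swapT k H P.R) :
    let S : H →ₗ[k] H := HopfAlgebra.antipode k
    let ρl : H →ₗ[k] H ⊗[k] H :=
      (LinearMap.mulRight k P.R).comp ((LinearMap.mulLeft k P.Rinv).comp
        (Algebra.TensorProduct.includeRight : H →ₐ[k] H ⊗[k] H).toLinearMap)
    ((LinearMap.rTensor H (LinearMap.mul' k H)).comp
      ((TensorProduct.assoc k H H H).symm.toLinearMap.comp (TensorProduct.map S ρl))) P.χ
      = -P.χ := by
  intro S ρl
  -- Step 0: the theorem's map applied to χ equals `Fmap (leg23 Rinv * leg13 χ * leg23 R)`.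
  have key : ∀ x : H ⊗[k] H,
      ((LinearMap.rTensor H (LinearMap.mul' k H)).comp
        ((TensorProduct.assoc k H H H).symm.toLinearMap.comp (TensorProduct.map S ρl))) x
        = Fmap k H (leg23 k H P.Rinv * leg13 k H x * leg23 k H P.R) := by
    intro x
    induction x using TensorProduct.induction_on with
    | zero => simp
    | tmul a b =>
        have h13 : leg13 k H (a ⊗ₜ[k] b) = a ⊗ₜ[k] ((1 : H) ⊗ₜ[k] b) := rfl
        have h23R : leg23 k H P.R = (1 : H) ⊗ₜ[k] P.R := rfl
        have h23Ri : leg23 k H P.Rinv = (1 : H) ⊗ₜ[k] P.Rinv := rfl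
        have hprod : leg23 k H P.Rinv * leg13 k H (a ⊗ₜ[k] b) * leg23 k H P.R
            = a ⊗ₜ[k] (P.Rinv * ((1 : H) ⊗ₜ[k] b) * P.R) := by
          rw [h13, h23R, h23Ri, Algebra.TensorProduct.tmul_mul_tmul,
            Algebra.TensorProduct.tmul_mul_tmul, one_mul, mul_one]
        rw [hprod]
        have hρ : ρl b = P.Rinv * ((1 : H) ⊗ₜ[k] b) * P.R := rfl
        have hL : ((LinearMap.rTensor H (LinearMap.mul' k H)).comp
            ((TensorProduct.assoc k H H H).symm.toLinearMap.comp (TensorProduct.map S ρl)))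
            (a ⊗ₜ[k] b) = Fmap k H (a ⊗ₜ[k] ρl b) := by
          simp only [LinearMap.comp_apply, TensorProduct.map_tmul, Fmap,
            LinearMap.rTensor_tmul]
          rfl
        rw [hL, hρ]
    | add x y hx hy =>
        rw [map_add, hx, hy, map_add, mul_add, add_mul, map_add]
  rw [key P.χ]
  -- Step 1: `gmap (leg13 χ) = 0`.
  have hg : gmap k H (leg13 k H P.χ) = 0 := by
    have h2 := congrArg (gmap k H) P.chi_hex2
    rw [map_add, map_mul, map_mul, gmap_leg23, gmap_leg23, gmap_leg23, gmap_comulId,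
      left_eq_add] at h2
    set y := gmap k H (leg13 k H P.χ) with hy
    have h0 : y = P.R * (P.Rinv * y * P.R) * P.Rinv := by
      simp only [mul_assoc]
      rw [P.mul_inv, mul_one, ← mul_assoc, P.mul_inv, one_mul]
    rw [h0, h2, mul_zero, zero_mul]
  -- Step 2: combine.
  have hhex : leg23 k H P.Rinv * leg13 k H P.χ * leg23 k H P.R
      = comulId k H P.χ - leg23 k H P.χ := by
    rw [P.chi_hex2, add_sub_cancel_left]
  rw [hhex, map_sub, Fmap_comulId, Fmap_leg23, hg, zero_sub]

end
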